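/- Let l be a positive integer such that cos(√2·π·l) ≤ 0, and let A^l = (A_yes^l, A_no^l) be the promise problem over the alphabet {a, b} with A_yes^l = {w ∈ {a,b}* : #_a(w) = #_b(w)} and A_no^l = {w ∈ {a,b}* : #_a(w) + l = #_b(w)}, where #_σ(w) denotes the number of occurrences of σ in w. Then A^l can be recognized exactly by a pvMO-1QFA with 3 quantum basis states, but A^l cannot be recognized by any pvDFA. -/

import Mathlib

/-- The extended transition function `δ̂`: run a finite automaton's transition
function on a whole word. -/
def evalWord {α : Type} {n : ℕ} (δ : Fin n → α → Fin n) (s : Fin n) (w : List α) : Fin n :=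
  w.foldl δ s

/-- A promise version deterministic finite automaton (pvDFA) over the
alphabet `α`, with (finite) state set `Fin n`, transition function `step`,
initial state `start`, and disjoint sets of accepting and rejecting states. -/
structure PVDFA (α : Type) (n : ℕ) where
  step : Fin n → α → Fin n
  start : Fin n
  accept : Finset (Fin n)
  reject : Finset (Fin n)
  disj : Disjoint accept reject

namespace PVDFA

/-- The state reached by the pvDFA after reading the word `w`. -/
def eval {α : Type} {n : ℕ} (M : PVDFA α n) (w : List α) : Fin n :=
  evalWord M.step M.start w

/-- A pvDFA recognizes the promise problem `(Ayes, Ano)`: for every word `w`,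
`w ∈ Ayes` iff the reached state is accepting, and `w ∈ Ano` iff it is rejecting. -/
def Recognizes {α : Type} {n : ℕ} (M : PVDFA α n) (Ayes Ano : Set (List α)) : Prop :=
  (∀ w, w ∈ Ayes ↔ M.eval w ∈ M.accept) ∧ (∀ w, w ∈ Ano ↔ M.eval w ∈ M.reject)

/-- A pvDFA solves the promise problem `(Ayes, Ano)`: every `w ∈ Ayes` leads to an
accepting state and every `w ∈ Ano` leads to a rejecting state. -/
def Solves {α : Type} {n : ℕ} (M : PVDFA α n) (Ayes Ano : Set (List α)) : Prop :=
  (∀ w ∈ Ayes, M.eval w ∈ M.accept) ∧ (∀ w ∈ Ano, M.eval w ∈ M.reject)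

end PVDFA

/-- The first standard basis vector `e₀` of `ℂⁿ`, the initial quantum state. -/
def qInit (n : ℕ) : Fin n → ℂ := fun i => if i.val = 0 then 1 else 0

/-- The total matrix applied by an MO-1QFA on input `w`:
`U_$ · U_{σ_m} ⋯ U_{σ_1} · U_¢`. -/
noncomputable def qfaMatrix {α : Type} {n : ℕ} (Uc Ud : Matrix (Fin n) (Fin n) ℂ)
    (U : α → Matrix (Fin n) (Fin n) ℂ) (w : List α) : Matrix (Fin n) (Fin n) ℂ :=
  Ud * w.foldl (fun M σ => U σ * M) Uc

/-- `‖P_Q v‖²`: the probability of observing an outcome in `Q` when measuring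
the vector `v` in the standard basis. -/
noncomputable def probOn {n : ℕ} (Q : Finset (Fin n)) (v : Fin n → ℂ) : ℝ :=
  ∑ i ∈ Q, ‖v i‖ ^ 2

/-- `A_yes^l`: words over `{a, b}` (with `a = false`, `b = true`) having equally
many `a`'s and `b`'s. -/
def AyesQ (_l : ℕ) : Set (List Bool) := {w | w.count false = w.count true}

/-- `A_no^l`: words over `{a, b}` with `#_a(w) + l = #_b(w)`. -/
def AnoQ (l : ℕ) : Set (List Bool) := {w | w.count false + l = w.count true}

noncomputable section Stmt17Aux

open Real Matrix

private def rotZ (φ : ℝ) : Matrix (Fin 3) (Fin 3) ℂ :=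
  ![![((Real.cos φ : ℝ) : ℂ), ((-Real.sin φ : ℝ) : ℂ), 0],
    ![((Real.sin φ : ℝ) : ℂ), ((Real.cos φ : ℝ) : ℂ), 0],
    ![0, 0, 1]]

private def ucMat (a b : ℝ) : Matrix (Fin 3) (Fin 3) ℂ :=
  ![![((a : ℝ) : ℂ), 0, ((-b : ℝ) : ℂ)],
    ![0, 1, 0],
    ![((b : ℝ) : ℂ), 0, ((a : ℝ) : ℂ)]]

private def udMat (a b C S : ℝ) : Matrix (Fin 3) (Fin 3) ℂ :=
  ![![((a : ℝ) : ℂ), 0, ((b : ℝ) : ℂ)],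
    ![((a*C : ℝ) : ℂ), ((-(a*S) : ℝ) : ℂ), ((b : ℝ) : ℂ)],
    ![((a*b*S : ℝ) : ℂ), ((a*b*(C-1) : ℝ) : ℂ), ((-(a*a*S) : ℝ) : ℂ)]]

private lemma rotZ_mul (φ ψ : ℝ) : rotZ φ * rotZ ψ = rotZ (φ + ψ) := by
  ext i j
  simp only [Matrix.mul_apply]
  fin_cases i <;> fin_cases j <;>
    simp [rotZ, Matrix.mul_apply, Fin.sum_univ_three,
      -Complex.ofReal_cos, -Complex.ofReal_sin] <;>
    norm_cast <;>
    (first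
      | ring1
      | (rw [Real.cos_add] <;> ring1)
      | (rw [Real.sin_add] <;> ring1))

private lemma rotZ_zero : rotZ 0 = 1 := by
  ext i j
  fin_cases i <;> fin_cases j <;>
    simp [rotZ, Matrix.one_apply, Matrix.vecHead, Matrix.vecTail,
      -Complex.ofReal_cos, -Complex.ofReal_sin]

private lemma rotZ_star (φ : ℝ) : star (rotZ φ) = rotZ (-φ) := by
  ext i j
  simp only [Matrix.star_apply]
  fin_cases i <;> fin_cases j <;>
    simp [rotZ, Matrix.star_apply, Complex.conj_ofReal, Real.cos_neg, Real.sin_neg,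
      -Complex.ofReal_cos, -Complex.ofReal_sin]

private lemma rotZ_unitary (φ : ℝ) : rotZ φ ∈ Matrix.unitaryGroup (Fin 3) ℂ := by
  rw [Matrix.mem_unitaryGroup_iff, rotZ_star, rotZ_mul]
  rw [show φ + -φ = 0 by ring, rotZ_zero]

private lemma ucMat_unitary {a b : ℝ} (hab : a^2 + b^2 = 1) :
    ucMat a b ∈ Matrix.unitaryGroup (Fin 3) ℂ := by
  rw [Matrix.mem_unitaryGroup_iff]
  ext i j
  simp only [Matrix.mul_apply, Matrix.star_apply]
  fin_cases i <;> fin_cases j <;>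
    simp [ucMat, Matrix.mul_apply, Fin.sum_univ_three, Matrix.star_apply,
      Complex.conj_ofReal, Matrix.one_apply, Matrix.vecHead, Matrix.vecTail] <;>
    norm_cast <;>
    (first
      | ring1
      | linear_combination hab)

private lemma udMat_unitary {a b C S : ℝ} (hab : a^2 + b^2 = 1)
    (hp : S^2 + C^2 = 1) (hk : a^2*C + b^2 = 0) :
    udMat a b C S ∈ Matrix.unitaryGroup (Fin 3) ℂ := by
  rw [Matrix.mem_unitaryGroup_iff]
  ext i j
  simp only [Matrix.mul_apply, Matrix.star_apply]
  fin_cases i <;> fin_cases j <;>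
    simp [udMat, Matrix.mul_apply, Fin.sum_univ_three, Matrix.star_apply,
      Complex.conj_ofReal, Matrix.one_apply, Matrix.vecHead, Matrix.vecTail] <;>
    norm_cast <;>
    (first
      | ring1
      | linear_combination hab
      | linear_combination hk
      | linear_combination a^2 * hp + hab
      | linear_combination (a^2*(a^2+b^2)) * hp + (a^2+b^2+1) * hab - (a^2*C+b^2) * hk)

private lemma ucMat_mulVec (a b : ℝ) :
    (ucMat a b).mulVec (qInit 3) = ![((a:ℝ):ℂ), 0, ((b:ℝ):ℂ)] := by
  funext i
  fin_cases i <;>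
    simp [ucMat, qInit, Matrix.mulVec, dotProduct, Fin.sum_univ_three]

private lemma rotZ_mulVec (a b ψ : ℝ) :
    (rotZ ψ).mulVec ![((a:ℝ):ℂ), 0, ((b:ℝ):ℂ)]
      = ![((a*Real.cos ψ : ℝ):ℂ), ((a*Real.sin ψ : ℝ):ℂ), ((b:ℝ):ℂ)] := by
  funext i
  fin_cases i <;>
    simp [rotZ, Matrix.mulVec, dotProduct, Fin.sum_univ_three,
      -Complex.ofReal_cos, -Complex.ofReal_sin] <;>
    norm_cast <;> ring1

private lemma udMat_comp0 (a b C S ψ : ℝ) :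
    (udMat a b C S).mulVec ![((a*Real.cos ψ : ℝ):ℂ), ((a*Real.sin ψ : ℝ):ℂ), ((b:ℝ):ℂ)] 0
      = ((a^2*Real.cos ψ + b^2 : ℝ):ℂ) := by
  simp [udMat, Matrix.mulVec, dotProduct, Fin.sum_univ_three,
    -Complex.ofReal_cos, -Complex.ofReal_sin]
  norm_cast <;> ring1

private lemma udMat_comp1 (a b θl ψ : ℝ) :
    (udMat a b (Real.cos θl) (Real.sin θl)).mulVec
        ![((a*Real.cos ψ : ℝ):ℂ), ((a*Real.sin ψ : ℝ):ℂ), ((b:ℝ):ℂ)] 1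
      = ((a^2*Real.cos (ψ + θl) + b^2 : ℝ):ℂ) := by
  simp [udMat, Matrix.mulVec, dotProduct, Fin.sum_univ_three,
    -Complex.ofReal_cos, -Complex.ofReal_sin]
  rw [Real.cos_add] <;> norm_cast <;> ring1

private lemma sqrt2_cos_ne_one (m : ℤ) (hm : m ≠ 0) :
    Real.cos (Real.sqrt 2 * Real.pi * (m:ℝ)) ≠ 1 := by
  intro h
  obtain ⟨n, hn⟩ := (Real.cos_eq_one_iff _).mp h
  have h' : ((2*n : ℤ) : ℝ) * Real.pi = ((m:ℝ) * Real.sqrt 2) * Real.pi := by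
    push_cast
    linear_combination hn
  have h2 : ((2*n : ℤ) : ℝ) = (m:ℝ) * Real.sqrt 2 :=
    mul_right_cancel₀ Real.pi_ne_zero h'
  have hirr : Irrational ((m:ℝ) * Real.sqrt 2) := irrational_sqrt_two.intCast_mul hm
  rw [← h2] at hirr
  exact Int.not_irrational _ hirr

private lemma sqrt2_cos_ne_neg_one (m : ℤ) :
    Real.cos (Real.sqrt 2 * Real.pi * (m:ℝ)) ≠ -1 := by
  intro h
  rcases eq_or_ne m 0 with rfl | hm
  · norm_num at h
  · have harg : Real.sqrt 2 * Real.pi * ((2*m : ℤ):ℝ)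
        = 2 * (Real.sqrt 2 * Real.pi * (m:ℝ)) := by push_cast; ring
    have h2 : Real.cos (Real.sqrt 2 * Real.pi * ((2*m : ℤ):ℝ)) = 1 := by
      rw [harg, Real.cos_two_mul, h]; norm_num
    exact sqrt2_cos_ne_one (2*m) (by omega) h2

private lemma foldl_rotZ (θ : ℝ) (Uc : Matrix (Fin 3) (Fin 3) ℂ)
    (U : Bool → Matrix (Fin 3) (Fin 3) ℂ)
    (hf : U false = rotZ θ) (ht : U true = rotZ (-θ)) :
    ∀ (w : List Bool) (φ : ℝ),
      w.foldl (fun M σ => U σ * M) (rotZ φ * Uc)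
        = rotZ (φ + θ * ((w.count false : ℝ) - (w.count true : ℝ))) * Uc := by
  intro w
  induction w with
  | nil => intro φ; simp
  | cons σ t ih =>
    intro φ
    cases σ
    · rw [List.foldl_cons]
      have hstep : U false * (rotZ φ * Uc) = rotZ (θ + φ) * Uc := by
        rw [hf, ← mul_assoc, rotZ_mul]
      rw [hstep, ih (θ + φ)]
      have h1 : (false :: t).count false = t.count false + 1 := by simp
      have h2 : (false :: t).count true = t.count true := by simp
      have harg : θ + φ + θ * ((t.count false : ℝ) - (t.count true : ℝ))
          = φ + θ * (((false :: t).count false : ℝ) - (((false :: t).count true : ℝ))) := by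
        rw [h1, h2]; push_cast; ring
      rw [harg]
    · rw [List.foldl_cons]
      have hstep : U true * (rotZ φ * Uc) = rotZ (-θ + φ) * Uc := by
        rw [ht, ← mul_assoc, rotZ_mul]
      rw [hstep, ih (-θ + φ)]
      have h1 : (true :: t).count false = t.count false := by simp
      have h2 : (true :: t).count true = t.count true + 1 := by simp
      have harg : -θ + φ + θ * ((t.count false : ℝ) - (t.count true : ℝ))
          = φ + θ * (((true :: t).count false : ℝ) - (((true :: t).count true : ℝ))) := by
        rw [h1, h2]; push_cast; ring
      rw [harg]

end Stmt17Aux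

/-- for a positive integer `l` with `cos(√2·π·l) ≤ 0`, the promise
problem `A^l` can be recognized exactly by a pvMO-1QFA with 3 quantum basis
states, but cannot be recognized by any pvDFA. -/
theorem qfa_recognizes_but_no_dfa (l : ℕ) (hl : 0 < l)
    (hcos : Real.cos (Real.sqrt 2 * Real.pi * l) ≤ 0) :
    (∃ (Uc Ud : Matrix (Fin 3) (Fin 3) ℂ) (U : Bool → Matrix (Fin 3) (Fin 3) ℂ),
      Uc ∈ Matrix.unitaryGroup (Fin 3) ℂ ∧ Ud ∈ Matrix.unitaryGroup (Fin 3) ℂ ∧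
      (∀ σ, U σ ∈ Matrix.unitaryGroup (Fin 3) ℂ) ∧
      ∃ (Qa Qr : Finset (Fin 3)), Disjoint Qa Qr ∧
        ∀ w : List Bool,
          (w ∈ AyesQ l ↔ probOn Qa ((qfaMatrix Uc Ud U w).mulVec (qInit 3)) = 1) ∧
          (w ∈ AnoQ l ↔ probOn Qr ((qfaMatrix Uc Ud U w).mulVec (qInit 3)) = 1)) ∧
    ¬ ∃ (n : ℕ) (M : PVDFA Bool n), M.Recognizes (AyesQ l) (AnoQ l) := by
  constructor
  · -- QFA part
    set θ : ℝ := Real.sqrt 2 * Real.pi with hθ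
    set c : ℝ := Real.cos (θ * (l:ℝ)) with hc
    have hc1 : (0:ℝ) < 1 - c := by linarith
    set s : ℝ := 1 / (1 - c) with hs
    have hs0 : 0 < s := by rw [hs]; positivity
    have hs1 : s ≤ 1 := by rw [hs, div_le_one hc1]; linarith
    set a : ℝ := Real.sqrt s with ha
    set b : ℝ := Real.sqrt (1 - s) with hb
    have ha2 : a^2 = s := Real.sq_sqrt hs0.le
    have hb2 : b^2 = 1 - s := Real.sq_sqrt (by linarith)
    have hab : a^2 + b^2 = 1 := by rw [ha2, hb2]; ring
    set S : ℝ := Real.sin (θ * (l:ℝ)) with hS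
    have hp : S^2 + c^2 = 1 := by rw [hS, hc]; exact Real.sin_sq_add_cos_sq _
    have hkey : a^2 * c + b^2 = 0 := by
      rw [ha2, hb2, hs]
      field_simp
      ring
    have main_iff : ∀ m : ℤ, ((a^2 * Real.cos (θ * (m:ℝ)) + b^2)^2 = 1 ↔ m = 0) := by
      intro m
      constructor
      · intro h
        have hfac : (a^2 * Real.cos (θ*(m:ℝ)) + b^2 - 1)
            * (a^2 * Real.cos (θ*(m:ℝ)) + b^2 + 1) = 0 := by
          linear_combination h
        rcases mul_eq_zero.mp hfac with h1 | h1
        · rw [ha2, hb2] at h1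
          have h2 : s * Real.cos (θ*(m:ℝ)) = s * 1 := by linarith
          have hcos1 : Real.cos (θ*(m:ℝ)) = 1 := mul_left_cancel₀ hs0.ne' h2
          by_contra hm0
          rw [hθ] at hcos1
          exact sqrt2_cos_ne_one m hm0 hcos1
        · rw [ha2, hb2] at h1
          have hxge : -1 ≤ Real.cos (θ*(m:ℝ)) := Real.neg_one_le_cos _
          have hmul : s * (-1) ≤ s * Real.cos (θ*(m:ℝ)) :=
            mul_le_mul_of_nonneg_left hxge hs0.le
          have hs1' : (1:ℝ) ≤ s := by nlinarith
          have hseq : s = 1 := le_antisymm hs1 hs1'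
          have hcosm : Real.cos (θ*(m:ℝ)) = -1 := by
            rw [hseq] at h1; linarith
          rw [hθ] at hcosm
          exact absurd hcosm (sqrt2_cos_ne_neg_one m)
      · rintro rfl
        simp only [Int.cast_zero, mul_zero, Real.cos_zero, mul_one, hab, one_pow]
    refine ⟨ucMat a b, udMat a b c S, (fun σ => if σ then rotZ (-θ) else rotZ θ),
      ucMat_unitary hab, udMat_unitary hab hp hkey, ?_, {0}, {1}, ?_, ?_⟩
    · intro σ; cases σ
      · simpa using rotZ_unitary θ
      · simpa using rotZ_unitary (-θ)
    · decide
    · intro w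
      set kZ : ℤ := (w.count false : ℤ) - (w.count true : ℤ) with hk
      have hfoldw : (List.foldl
          (fun (M : Matrix (Fin 3) (Fin 3) ℂ) (σ : Bool) =>
            (if σ then rotZ (-θ) else rotZ θ) * M) (ucMat a b) w)
          = rotZ (θ * (kZ:ℝ)) * ucMat a b := by
        conv_lhs => rw [show ucMat a b = rotZ 0 * ucMat a b by rw [rotZ_zero, one_mul]]
        rw [foldl_rotZ θ (ucMat a b) _ rfl rfl w 0]
        have harg : 0 + θ * ((w.count false : ℝ) - (w.count true : ℝ)) = θ * (kZ:ℝ) := by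
          rw [hk]; push_cast; ring
        rw [harg]
      have hmat : qfaMatrix (ucMat a b) (udMat a b c S)
            (fun σ => if σ then rotZ (-θ) else rotZ θ) w
          = udMat a b c S * (rotZ (θ * (kZ:ℝ)) * ucMat a b) := by
        simp only [qfaMatrix]
        rw [hfoldw]
      have hvec : (qfaMatrix (ucMat a b) (udMat a b c S)
            (fun σ => if σ then rotZ (-θ) else rotZ θ) w).mulVec (qInit 3)
          = (udMat a b c S).mulVec
              ((rotZ (θ * (kZ:ℝ))).mulVec ((ucMat a b).mulVec (qInit 3))) := by
        rw [hmat, ← Matrix.mulVec_mulVec, ← Matrix.mulVec_mulVec]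
      have hcomp0 : (qfaMatrix (ucMat a b) (udMat a b c S)
            (fun σ => if σ then rotZ (-θ) else rotZ θ) w).mulVec (qInit 3) 0
          = ((a^2*Real.cos (θ * (kZ:ℝ)) + b^2 : ℝ):ℂ) := by
        rw [hvec, ucMat_mulVec, rotZ_mulVec, udMat_comp0]
      have hcomp1 : (qfaMatrix (ucMat a b) (udMat a b c S)
            (fun σ => if σ then rotZ (-θ) else rotZ θ) w).mulVec (qInit 3) 1
          = ((a^2*Real.cos (θ * (kZ:ℝ) + θ * (l:ℝ)) + b^2 : ℝ):ℂ) := by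
        rw [hvec, ucMat_mulVec, rotZ_mulVec, hc, hS, udMat_comp1]
      have hprob0 : probOn {0} ((qfaMatrix (ucMat a b) (udMat a b c S)
            (fun σ => if σ then rotZ (-θ) else rotZ θ) w).mulVec (qInit 3))
          = (a^2*Real.cos (θ * (kZ:ℝ)) + b^2)^2 := by
        simp only [probOn, Finset.sum_singleton, hcomp0, Complex.norm_real,
          Real.norm_eq_abs, sq_abs]
      have hprob1 : probOn {1} ((qfaMatrix (ucMat a b) (udMat a b c S)
            (fun σ => if σ then rotZ (-θ) else rotZ θ) w).mulVec (qInit 3))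
          = (a^2*Real.cos (θ * (kZ:ℝ) + θ * (l:ℝ)) + b^2)^2 := by
        simp only [probOn, Finset.sum_singleton, hcomp1, Complex.norm_real,
          Real.norm_eq_abs, sq_abs]
      have hyes : (w ∈ AyesQ l) ↔ kZ = 0 := by
        simp only [AyesQ, Set.mem_setOf_eq, hk]; omega
      have hno : (w ∈ AnoQ l) ↔ kZ + (l:ℤ) = 0 := by
        simp only [AnoQ, Set.mem_setOf_eq, hk]; omega
      constructor
      · rw [hprob0, hyes]
        exact (main_iff kZ).symm
      · rw [hprob1, hno]
        have harg2 : θ * (kZ:ℝ) + θ * (l:ℝ) = θ * (((kZ + (l:ℤ)) : ℤ):ℝ) := by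
          push_cast; ring
        rw [harg2]
        exact (main_iff (kZ + (l:ℤ))).symm
  · -- no pvDFA
    rintro ⟨n, M, hacc, _hrej⟩
    obtain ⟨i, j, hij, heq⟩ := Fintype.exists_ne_map_eq_of_card_lt
      (fun i : Fin (n+1) => evalWord M.step M.start (List.replicate i.1 false))
      (by simp)
    have hval : (i.1 : ℕ) ≠ j.1 := fun h => hij (Fin.ext h)
    have heq' : evalWord M.step M.start (List.replicate i.1 false)
        = evalWord M.step M.start (List.replicate j.1 false) := heq
    have hw1 : (List.replicate i.1 false ++ List.replicate i.1 true) ∈ AyesQ l := by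
      simp [AyesQ, List.count_append, List.count_replicate]
    have hmem : M.eval (List.replicate i.1 false ++ List.replicate i.1 true) ∈ M.accept :=
      (hacc _).mp hw1
    have heval : M.eval (List.replicate j.1 false ++ List.replicate i.1 true)
        = M.eval (List.replicate i.1 false ++ List.replicate i.1 true) := by
      show evalWord M.step M.start _ = evalWord M.step M.start _
      simp only [evalWord, List.foldl_append]
      rw [show List.foldl M.step M.start (List.replicate j.1 false)
            = List.foldl M.step M.start (List.replicate i.1 false) from heq'.symm]
    have hw2 : (List.replicate j.1 false ++ List.replicate i.1 true) ∈ AyesQ l :=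
      (hacc _).mpr (by rw [heval]; exact hmem)
    have : j.1 = i.1 := by
      simpa [AyesQ, List.count_append, List.count_replicate] using hw2
    exact hval this.symm
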